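/- Let r ≥ 2 be an integer, set R = ℤ/2^rℤ and N = R^{⊕10} ⊕ ℤ/2ℤ. If M is an R-module fitting into a short exact sequence of R-modules 0 → N → M → ℤ/2ℤ → 0, then either M ≅ R^{⊕10} ⊕ ℤ/2ℤ ⊕ ℤ/2ℤ or M ≅ R^{⊕10} ⊕ ℤ/4ℤ as R-modules. -/
import Mathlib

section Aux

private lemma zmod_smul_eq' {q : ℕ} [NeZero q] {A : Type*} [AddCommMonoid A] [Module (ZMod q) A]
    (a : ZMod q) (x : A) : a • x = a.val • x := by
  conv_lhs => rw [← ZMod.natCast_rightInverse a]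
  rw [Nat.cast_smul_eq_nsmul]

private lemma nsmul_mod' {A : Type*} [AddCommMonoid A] {n : ℕ} {x : A} (hx : n • x = 0)
    (k : ℕ) : k • x = (k % n) • x := by
  conv_lhs => rw [← Nat.div_add_mod k n]
  rw [add_nsmul, mul_nsmul x n (k / n), hx, smul_zero, zero_add]

private lemma nsmul_congr' {A : Type*} [AddCommMonoid A] {n : ℕ} {x : A} (hx : n • x = 0)
    {k k' : ℕ} (h : k % n = k' % n) : k • x = k' • x := by
  rw [nsmul_mod' hx k, h, ← nsmul_mod' hx k']

private def valSmul' {q n : ℕ} [NeZero q] [NeZero n] {M : Type} [AddCommGroup M]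
    [Module (ZMod q) M] [Module (ZMod q) (ZMod n)] (x : M) (hx : n • x = 0) :
    ZMod n →ₗ[ZMod q] M where
  toFun b := b.val • x
  map_add' b c := by
    show (b + c).val • x = b.val • x + c.val • x
    rw [ZMod.val_add, ← add_nsmul]
    exact (nsmul_mod' hx _).symm
  map_smul' a b := by
    simp only [RingHom.id_apply]
    rw [zmod_smul_eq' a b, zmod_smul_eq' a (b.val • x), nsmul_eq_mul, ZMod.val_mul,
      ZMod.val_natCast, ← mul_nsmul x b.val a.val]
    exact nsmul_congr' hx (by
      rw [Nat.mod_mod_of_dvd _ dvd_rfl, Nat.mul_mod, Nat.mod_mod_of_dvd _ dvd_rfl,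
        ← Nat.mul_mod, mul_comm])

@[simp] private lemma valSmul'_apply {q n : ℕ} [NeZero q] [NeZero n] {M : Type} [AddCommGroup M]
    [Module (ZMod q) M] [Module (ZMod q) (ZMod n)] (x : M) (hx : n • x = 0) (b : ZMod n) :
    valSmul' (q := q) x hx b = b.val • x := rfl

end Aux

/-- Let `r ≥ 2`, `R = ℤ/2^rℤ`, `N = R^{⊕10} ⊕ ℤ/2ℤ`.  If `M` is an `R`-module
fitting into a short exact sequence of `R`-modules `0 → N → M → ℤ/2ℤ → 0`, then
either `M ≅ R^{⊕10} ⊕ ℤ/2ℤ ⊕ ℤ/2ℤ` or `M ≅ R^{⊕10} ⊕ ℤ/4ℤ` as `R`-modules.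
Here `ℤ/2ℤ` and `ℤ/4ℤ` are `R`-modules via the canonical surjections (these
`R`-module structures are unique, so we quantify over them as instances). -/
theorem stmt_2 (r : ℕ) (hr : 2 ≤ r)
    [Module (ZMod (2 ^ r)) (ZMod 2)] [Module (ZMod (2 ^ r)) (ZMod 4)]
    (M : Type) [AddCommGroup M] [Module (ZMod (2 ^ r)) M]
    (ι : ((Fin 10 → ZMod (2 ^ r)) × ZMod 2) →ₗ[ZMod (2 ^ r)] M)
    (π : M →ₗ[ZMod (2 ^ r)] ZMod 2)
    (hι : Function.Injective ι) (hπ : Function.Surjective π)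
    (hexact : LinearMap.range ι = LinearMap.ker π) :
    Nonempty (M ≃ₗ[ZMod (2 ^ r)] (Fin 10 → ZMod (2 ^ r)) × ZMod 2 × ZMod 2) ∨
    Nonempty (M ≃ₗ[ZMod (2 ^ r)] (Fin 10 → ZMod (2 ^ r)) × ZMod 4) := by
  haveI : NeZero (2 ^ r) := ⟨by positivity⟩
  have htwo : ∀ s : ZMod 2, s = 0 ∨ s = 1 := by decide
  have hπι : ∀ x, π (ι x) = 0 := fun x => by
    rw [← LinearMap.mem_ker, ← hexact]; exact ⟨x, rfl⟩
  -- cardinality of M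
  have hcardF : Nat.card (Fin 10 → ZMod (2 ^ r)) = (2 ^ r) ^ 10 := by
    simp [Nat.card_pi, Nat.card_zmod]
  have hcard_ker : Nat.card (LinearMap.ker π) = (2 ^ r) ^ 10 * 2 := by
    rw [← hexact, Nat.card_congr (LinearEquiv.ofInjective ι hι).toEquiv.symm, Nat.card_prod,
      Nat.card_zmod, hcardF]
  have hcardM : Nat.card M = (2 ^ r) ^ 10 * 2 * 2 := by
    rw [Submodule.card_eq_card_quotient_mul_card (LinearMap.ker π), hcard_ker,
      Nat.card_congr (π.quotKerEquivOfSurjective hπ).toEquiv, Nat.card_zmod]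
  -- choose a lift of 1
  obtain ⟨m, hm⟩ := hπ 1
  have h2mem : 2 • m ∈ LinearMap.range ι := by
    rw [hexact, LinearMap.mem_ker, map_nsmul, hm]
    decide
  obtain ⟨⟨v, t⟩, hvt⟩ := h2mem
  -- the exponent bound shows v is divisible by 2
  have hrm : (2 ^ r) • m = 0 := by
    rw [← Nat.cast_smul_eq_nsmul (ZMod (2 ^ r)), ZMod.natCast_self, zero_smul]
  have hpow : 2 * 2 ^ (r - 1) = 2 ^ r := by
    rw [mul_comm, ← pow_succ]
    congr 1
    omega
  have hvt2 : ((2 ^ (r - 1) : ℕ) : ZMod (2 ^ r)) •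
      ((v, t) : (Fin 10 → ZMod (2 ^ r)) × ZMod 2) = 0 := by
    apply hι
    rw [map_smul, hvt, Nat.cast_smul_eq_nsmul, ← mul_nsmul m 2 (2 ^ (r - 1)), hpow, hrm, map_zero]
  have hdvd : ∀ i, ∃ c, v i = 2 * c := by
    intro i
    have h : ((2 ^ (r - 1) : ℕ) : ZMod (2 ^ r)) • v i = 0 := by
      have h1 := congrArg Prod.fst hvt2
      simp only [Prod.smul_fst, Prod.fst_zero] at h1
      simpa using congrFun h1 i
    have h2 : ((2 ^ (r - 1) * (v i).val : ℕ) : ZMod (2 ^ r)) = 0 := by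
      rw [Nat.cast_mul, ZMod.natCast_val, ZMod.cast_id, ← smul_eq_mul]
      exact h
    have h3 : (2 ^ r : ℕ) ∣ 2 ^ (r - 1) * (v i).val :=
      (ZMod.natCast_eq_zero_iff _ _).mp h2
    have h4 : 2 ∣ (v i).val := by
      rcases h3 with ⟨c, hc⟩
      have hpos : 0 < 2 ^ (r - 1) := by positivity
      refine ⟨c, Nat.eq_of_mul_eq_mul_left hpos ?_⟩
      rw [hc, ← hpow]; ring
    obtain ⟨c, hc⟩ := h4
    refine ⟨(c : ZMod (2 ^ r)), ?_⟩
    have hv : ((v i).val : ZMod (2 ^ r)) = v i := by rw [ZMod.natCast_val, ZMod.cast_id]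
    rw [← hv, hc]
    push_cast
    ring
  choose w hw using hdvd
  set m' : M := m - ι (w, 0) with hm'def
  have hπm' : π m' = 1 := by
    rw [hm'def, map_sub, hm, hπι, sub_zero]
  have h2m' : (2 : ℕ) • m' = ι (0, t) := by
    have e : (2 : ℕ) • ι ((w, 0) : (Fin 10 → ZMod (2 ^ r)) × ZMod 2) = ι (w + w, 0) := by
      rw [two_nsmul, ← map_add, Prod.mk_add_mk, add_zero]
    have hv : v - (w + w) = 0 := by
      funext i
      simp only [Pi.sub_apply, Pi.add_apply, Pi.zero_apply, hw i, two_mul]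
      ring
    rw [hm'def, smul_sub, ← hvt, e, ← map_sub, Prod.mk_sub_mk, hv, sub_zero]
  rcases htwo t with ht | ht
  · -- split case
    left
    have h0 : (2 : ℕ) • m' = 0 := by
      rw [h2m', ht]
      exact map_zero ι
    let g : ZMod 2 →ₗ[ZMod (2 ^ r)] M := valSmul' m' h0
    let f : (Fin 10 → ZMod (2 ^ r)) × ZMod 2 × ZMod 2 →ₗ[ZMod (2 ^ r)] M :=
      ι.comp ((LinearMap.fst (ZMod (2 ^ r)) (Fin 10 → ZMod (2 ^ r)) (ZMod 2 × ZMod 2)).prod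
        ((LinearMap.fst (ZMod (2 ^ r)) (ZMod 2) (ZMod 2)).comp
          (LinearMap.snd (ZMod (2 ^ r)) (Fin 10 → ZMod (2 ^ r)) (ZMod 2 × ZMod 2)))) +
      g.comp ((LinearMap.snd (ZMod (2 ^ r)) (ZMod 2) (ZMod 2)).comp
        (LinearMap.snd (ZMod (2 ^ r)) (Fin 10 → ZMod (2 ^ r)) (ZMod 2 × ZMod 2)))
    have hf : ∀ (a : Fin 10 → ZMod (2 ^ r)) (s b : ZMod 2),
        f (a, s, b) = ι (a, s) + b.val • m' := fun _ _ _ => rfl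
    have hsurj : Function.Surjective f := by
      intro y
      rcases htwo (π y) with h | h
      · have : y ∈ LinearMap.range ι := by rw [hexact, LinearMap.mem_ker]; exact h
        obtain ⟨⟨a, s⟩, ha⟩ := this
        exact ⟨(a, s, 0), by rw [hf, ha]; simp⟩
      · have : y - m' ∈ LinearMap.range ι := by
          rw [hexact, LinearMap.mem_ker, map_sub, h, hπm', sub_self]
        obtain ⟨⟨a, s⟩, ha⟩ := this
        refine ⟨(a, s, 1), ?_⟩
        rw [hf, ha]
        have h1v : ((1 : ZMod 2)).val = 1 := by decide
        rw [h1v, one_nsmul, sub_add_cancel]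
    have hcard : Nat.card ((Fin 10 → ZMod (2 ^ r)) × ZMod 2 × ZMod 2) = Nat.card M := by
      rw [hcardM, Nat.card_prod, Nat.card_prod, Nat.card_zmod, hcardF]; ring
    exact ⟨(LinearEquiv.ofBijective f
      ((Nat.bijective_iff_surjective_and_card f).mpr ⟨hsurj, hcard⟩)).symm⟩
  · -- nonsplit case
    right
    have h4 : (4 : ℕ) • m' = 0 := by
      have e : (4 : ℕ) • m' = (2 : ℕ) • ((2 : ℕ) • m') := by
        rw [← mul_nsmul m' 2 2]
      have h11 : ((1 : ZMod 2) + 1) = 0 := by decide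
      rw [e, h2m', ht, two_nsmul, ← map_add, Prod.mk_add_mk, h11, add_zero]
      exact map_zero ι
    let g : ZMod 4 →ₗ[ZMod (2 ^ r)] M := valSmul' m' h4
    let f : (Fin 10 → ZMod (2 ^ r)) × ZMod 4 →ₗ[ZMod (2 ^ r)] M :=
      (ι.comp (LinearMap.inl (ZMod (2 ^ r)) (Fin 10 → ZMod (2 ^ r)) (ZMod 2))).comp
        (LinearMap.fst (ZMod (2 ^ r)) (Fin 10 → ZMod (2 ^ r)) (ZMod 4)) +
      g.comp (LinearMap.snd (ZMod (2 ^ r)) (Fin 10 → ZMod (2 ^ r)) (ZMod 4))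
    have hf : ∀ (a : Fin 10 → ZMod (2 ^ r)) (b : ZMod 4),
        f (a, b) = ι (a, 0) + b.val • m' := fun _ _ => rfl
    have key : ∀ a : Fin 10 → ZMod (2 ^ r), ι (a, (1 : ZMod 2)) = ι (a, 0) + (2 : ℕ) • m' := by
      intro a
      rw [h2m', ht, ← map_add, Prod.mk_add_mk, add_zero, zero_add]
    have hsurj : Function.Surjective f := by
      intro y
      rcases htwo (π y) with h | h
      · have : y ∈ LinearMap.range ι := by rw [hexact, LinearMap.mem_ker]; exact h
        obtain ⟨⟨a, s⟩, ha⟩ := this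
        rcases htwo s with hs | hs
        · refine ⟨(a, 0), ?_⟩
          rw [hf, ← ha, hs]
          simp
        · refine ⟨(a, 2), ?_⟩
          rw [hf, ← ha, hs, key a]
          have h2v : ((2 : ZMod 4)).val = 2 := by decide
          rw [h2v]
      · have : y - m' ∈ LinearMap.range ι := by
          rw [hexact, LinearMap.mem_ker, map_sub, h, hπm', sub_self]
        obtain ⟨⟨a, s⟩, ha⟩ := this
        rcases htwo s with hs | hs
        · refine ⟨(a, 1), ?_⟩
          rw [hf]
          have h1v : ((1 : ZMod 4)).val = 1 := by decide
          rw [hs] at ha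
          rw [h1v, one_nsmul, ha, sub_add_cancel]
        · refine ⟨(a, 3), ?_⟩
          rw [hf]
          have h3v : ((3 : ZMod 4)).val = 3 := by decide
          have e3 : (3 : ℕ) • m' = (2 : ℕ) • m' + m' := by
            rw [show (3 : ℕ) = 2 + 1 by rfl, add_nsmul, one_nsmul]
          rw [hs] at ha
          rw [h3v, e3, ← add_assoc, ← key a, ha, sub_add_cancel]
    have hcard : Nat.card ((Fin 10 → ZMod (2 ^ r)) × ZMod 4) = Nat.card M := by
      rw [hcardM, Nat.card_prod, Nat.card_zmod, hcardF]; ring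
    exact ⟨(LinearEquiv.ofBijective f
      ((Nat.bijective_iff_surjective_and_card f).mpr ⟨hsurj, hcard⟩)).symm⟩
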